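/- arXiv:1603.02401 — 3 statements merged into one kernel-verified Lean document; each statement's English description precedes it below -/
import Mathlib

section
/- There exist absolute constants c, C > 0 such that for every positive integer n and every a = (a_i)_{i=1}^n ∈ ℝ^n, if g_1, …, g_n are independent standard Gaussian random variables and (a_i^*)_{i≤n} denotes the decreasing rearrangement of (|a_i|)_{i≤n}, then c · max_{i≤n} √(log(i+3)) · a_i^* ≤ E max_{i≤n} |a_i g_i| ≤ C · max_{i≤n} √(log(i+3)) · a_i^*. -/
open MeasureTheory ProbabilityTheory Real
open scoped ENNReal NNReal

/-! ### Auxiliary definitions and gaussian facts -/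

noncomputable def myPdf (x : ℝ) : ℝ := (Real.sqrt (2*π))⁻¹ * Real.exp (-x^2/2)

lemma myPdf_nonneg (x : ℝ) : 0 ≤ myPdf x := by unfold myPdf; positivity

lemma pdf_eq (x : ℝ) : gaussianPDFReal 0 1 x = myPdf x := by
  simp [gaussianPDFReal, myPdf]

lemma smul_eq_myPdf (f : ℝ → ℝ) (x : ℝ) :
    (gaussianPDFReal 0 1 x).toNNReal • f x = myPdf x * f x := by
  rw [NNReal.smul_def, Real.coe_toNNReal _ (gaussianPDFReal_nonneg 0 1 x), pdf_eq, smul_eq_mul]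

lemma gaussPDF_eq : gaussianPDF 0 1 = fun x => ((gaussianPDFReal 0 1 x).toNNReal : ℝ≥0∞) := by
  ext x; rfl

lemma gauss_density (f : ℝ → ℝ) :
    ∫ x, f x ∂(gaussianReal 0 1) = ∫ x, myPdf x * f x := by
  rw [gaussianReal_of_var_ne_zero _ one_ne_zero, gaussPDF_eq,
    integral_withDensity_eq_integral_smul ((measurable_gaussianPDFReal 0 1).real_toNNReal)]
  exact integral_congr_ae (Filter.Eventually.of_forall fun x => smul_eq_myPdf f x)

lemma gauss_integrable_iff (f : ℝ → ℝ) :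
    Integrable f (gaussianReal 0 1) ↔ Integrable (fun x => myPdf x * f x) := by
  rw [gaussianReal_of_var_ne_zero _ one_ne_zero, gaussPDF_eq,
    integrable_withDensity_iff_integrable_smul ((measurable_gaussianPDFReal 0 1).real_toNNReal)]
  exact integrable_congr (Filter.Eventually.of_forall fun x => smul_eq_myPdf f x)

lemma myPdf_shift (t x : ℝ) : myPdf x * Real.exp (t*x) = Real.exp (t^2/2) * gaussianPDFReal t 1 x := by
  simp only [myPdf, gaussianPDFReal]
  push_cast
  have h : rexp (t*x) * rexp (-x^2/2) = rexp (t^2/2) * rexp (-(x-t)^2/2) := by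
    rw [← Real.exp_add, ← Real.exp_add]; congr 1; ring
  rw [mul_one, mul_one]
  linear_combination (Real.sqrt (2*π))⁻¹ * h

lemma gauss_mgf_integrable (t : ℝ) :
    Integrable (fun x => Real.exp (t*x)) (gaussianReal 0 1) := by
  rw [gauss_integrable_iff]
  refine Integrable.congr ((integrable_gaussianPDFReal t 1).const_mul (Real.exp (t^2/2)))
    (Filter.Eventually.of_forall fun x => ?_)
  simp only [← myPdf_shift]

lemma gauss_mgf (t : ℝ) :
    ∫ x, Real.exp (t*x) ∂(gaussianReal 0 1) = Real.exp (t^2/2) := by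
  rw [gauss_density]
  calc ∫ x, myPdf x * Real.exp (t*x)
      = ∫ x, Real.exp (t^2/2) * gaussianPDFReal t 1 x := by
        exact integral_congr_ae (Filter.Eventually.of_forall fun x => myPdf_shift t x)
    _ = Real.exp (t^2/2) := by
        rw [integral_const_mul, integral_gaussianPDFReal_eq_one t one_ne_zero, mul_one]

lemma plus_le (b x : ℝ) (hb : 0 < b) :
    max (|x| - b) 0 ≤ (Real.exp (b*x) + Real.exp (-b*x)) * (Real.exp (-b^2-1)/b) := by
  have hpos : 0 ≤ (Real.exp (b*x) + Real.exp (-b*x)) * (Real.exp (-b^2-1)/b) := by positivity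
  rw [max_le_iff]
  refine ⟨?_, hpos⟩
  have h1 : b * (|x| - b) ≤ Real.exp (b * (|x| - b) - 1) := by
    have := Real.add_one_le_exp (b * (|x| - b) - 1)
    linarith
  have h2 : Real.exp (b * (|x| - b) - 1) = Real.exp (b * |x|) * Real.exp (-b^2 - 1) := by
    rw [← Real.exp_add]; congr 1; ring
  have h3 : Real.exp (b * |x|) ≤ Real.exp (b*x) + Real.exp (-b*x) := by
    rcases abs_cases x with ⟨h, _⟩ | ⟨h, _⟩
    · rw [h]; nlinarith [Real.exp_pos (-b*x)]
    · rw [h, mul_neg, ← neg_mul]; nlinarith [Real.exp_pos (b*x)]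
  have key : b * (|x| - b) ≤ (Real.exp (b*x) + Real.exp (-b*x)) * Real.exp (-b^2-1) := by
    calc b * (|x| - b) ≤ Real.exp (b * |x|) * Real.exp (-b^2 - 1) := by rw [← h2]; exact h1
      _ ≤ _ := by nlinarith [Real.exp_pos (-b^2-1)]
  rw [div_eq_mul_inv, ← mul_assoc]
  have hbinv : (0:ℝ) ≤ b⁻¹ := by positivity
  calc |x| - b = b * (|x| - b) * b⁻¹ := by field_simp
    _ ≤ (Real.exp (b*x) + Real.exp (-b*x)) * Real.exp (-b^2-1) * b⁻¹ :=
        mul_le_mul_of_nonneg_right key hbinv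

lemma plus_integrable (b : ℝ) (hb : 0 < b) :
    Integrable (fun x => max (|x| - b) 0) (gaussianReal 0 1) := by
  refine Integrable.mono' (((gauss_mgf_integrable b).add (gauss_mgf_integrable (-b))).mul_const
    (Real.exp (-b^2-1)/b)) ?_ (Filter.Eventually.of_forall fun x => ?_)
  · exact ((continuous_abs.sub continuous_const).max continuous_const).aestronglyMeasurable
  · rw [Real.norm_eq_abs, abs_of_nonneg (le_max_right (|x| - b) 0)]
    exact plus_le b x hb

lemma plus_integral_le (b : ℝ) (hb : 0 < b) :
    ∫ x, max (|x| - b) 0 ∂(gaussianReal 0 1) ≤ 2 * Real.exp (-b^2/2-1) / b := by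
  have h1 : ∫ x, max (|x| - b) 0 ∂(gaussianReal 0 1)
      ≤ ∫ x, (Real.exp (b*x) + Real.exp (-b*x)) * (Real.exp (-b^2-1)/b) ∂(gaussianReal 0 1) := by
    refine integral_mono (plus_integrable b hb)
      (((gauss_mgf_integrable b).add (gauss_mgf_integrable (-b))).mul_const _)
      fun x => plus_le b x hb
  have h2 : ∫ x, (Real.exp (b*x) + Real.exp (-b*x)) * (Real.exp (-b^2-1)/b) ∂(gaussianReal 0 1)
      = 2 * Real.exp (b^2/2) * (Real.exp (-b^2-1)/b) := by
    rw [integral_mul_const, integral_add (gauss_mgf_integrable b) ?h]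
    · rw [gauss_mgf]
      have : ∫ x, Real.exp (-b*x) ∂(gaussianReal 0 1) = Real.exp ((-b)^2/2) := gauss_mgf (-b)
      rw [this]; ring_nf
    · exact gauss_mgf_integrable (-b)
  rw [h2] at h1
  refine h1.trans (le_of_eq ?_)
  have hexp : Real.exp (b^2/2) * Real.exp (-b^2-1) = Real.exp (-b^2/2-1) := by
    rw [← Real.exp_add]; ring_nf
  calc 2 * Real.exp (b^2/2) * (Real.exp (-b^2-1)/b)
      = 2 * (Real.exp (b^2/2) * Real.exp (-b^2-1)) / b := by ring
    _ = 2 * Real.exp (-b^2/2-1) / b := by rw [hexp]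

lemma tail_lower (t : ℝ) (ht : 0 ≤ t) :
    myPdf (t+1) ≤ ((gaussianReal 0 1) {x | t ≤ |x|}).toReal := by
  rw [gaussianReal_apply_eq_integral 0 one_ne_zero _]
  rw [ENNReal.toReal_ofReal (integral_nonneg fun x => gaussianPDFReal_nonneg 0 1 x)]
  have hsub : Set.Icc t (t+1) ⊆ {x : ℝ | t ≤ |x|} := by
    intro x hx
    simp only [Set.mem_setOf_eq]
    calc t ≤ x := hx.1
      _ ≤ |x| := le_abs_self x
  have hint : IntegrableOn (gaussianPDFReal 0 1) {x : ℝ | t ≤ |x|} :=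
    (integrable_gaussianPDFReal 0 1).integrableOn
  have step1 : ∫ x in Set.Icc t (t+1), gaussianPDFReal 0 1 x
      ≤ ∫ x in {x : ℝ | t ≤ |x|}, gaussianPDFReal 0 1 x := by
    refine setIntegral_mono_set hint ?_ (Filter.Eventually.of_forall hsub)
    exact Filter.Eventually.of_forall fun x => gaussianPDFReal_nonneg 0 1 x
  refine le_trans ?_ step1
  have step2 : myPdf (t+1) * (volume (Set.Icc t (t+1))).toReal
      ≤ ∫ x in Set.Icc t (t+1), gaussianPDFReal 0 1 x := by
    refine setIntegral_ge_of_const_le_real measurableSet_Icc (by simp) ?_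
      ((integrable_gaussianPDFReal 0 1).integrableOn)
    intro x hx
    rw [pdf_eq]
    unfold myPdf
    have hx1 : x ≤ t + 1 := hx.2
    have hx0 : 0 ≤ x := le_trans ht hx.1
    have hsq : x^2 ≤ (t+1)^2 := by nlinarith
    have := Real.exp_le_exp.mpr (by linarith : -(t+1)^2/2 ≤ -x^2/2)
    have hs : (0:ℝ) < (Real.sqrt (2*π))⁻¹ := by positivity
    nlinarith
  calc myPdf (t+1) = myPdf (t+1) * (volume (Set.Icc t (t+1))).toReal := by
        rw [Real.volume_Icc]; norm_num
    _ ≤ _ := step2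

/-! ### Numeric facts -/

noncomputable def L (j : ℕ) : ℝ := Real.sqrt (Real.log ((j:ℝ) + 1 + 3))

lemma one_le_log4 (j : ℕ) : 1 ≤ Real.log ((j:ℝ) + 1 + 3) := by
  rw [Real.le_log_iff_exp_le (by positivity)]
  have hj : (0:ℝ) ≤ (j:ℝ) := Nat.cast_nonneg j
  nlinarith [Real.exp_one_lt_d9]

lemma one_le_L (j : ℕ) : 1 ≤ L j := by
  have h := Real.sqrt_le_sqrt (one_le_log4 j)
  rwa [Real.sqrt_one] at h

lemma L_pos (j : ℕ) : 0 < L j := lt_of_lt_of_le one_pos (one_le_L j)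

lemma exp_L_sq (j : ℕ) : Real.exp (L j ^ 2) = (j:ℝ) + 1 + 3 := by
  rw [L, Real.sq_sqrt (le_trans zero_le_one (one_le_log4 j)), Real.exp_log]
  positivity

lemma sum_inv_sq (n : ℕ) : ∑ i ∈ Finset.range n, (((i:ℝ) + 4) ^ 2)⁻¹ ≤ 1/3 := by
  have key : ∀ m : ℕ, ∑ i ∈ Finset.range m, (((i:ℝ) + 4) ^ 2)⁻¹ ≤ 1/3 - ((m:ℝ)+3)⁻¹ := by
    intro m
    induction m with
    | zero => norm_num
    | succ k ih =>
      rw [Finset.sum_range_succ]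
      have hc : (0:ℝ) ≤ (k:ℝ) := Nat.cast_nonneg k
      have h1 : (((k:ℝ)+3)*((k:ℝ)+4))⁻¹ = ((k:ℝ)+3)⁻¹ - ((k:ℝ)+4)⁻¹ := by
        field_simp
        ring
      have h2 : (((k:ℝ) + 4) ^ 2)⁻¹ ≤ (((k:ℝ)+3)*((k:ℝ)+4))⁻¹ := by
        apply inv_anti₀ (by positivity)
        nlinarith
      push_cast
      have hh : ((k:ℝ) + 1 + 3) = (k:ℝ) + 4 := by ring
      rw [hh]
      rw [h1] at h2
      linarith
  refine (key n).trans ?_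
  have h : (0:ℝ) < (n:ℝ) + 3 := by positivity
  have := inv_pos.mpr h
  linarith

lemma sqrt2pi_le : Real.sqrt (2*π) ≤ 2.51 := by
  rw [show (2.51:ℝ) = Real.sqrt (2.51^2) from (Real.sqrt_sq (by norm_num)).symm]
  apply Real.sqrt_le_sqrt
  nlinarith [Real.pi_lt_d6]

lemma sqrt2pi_pos : 0 < Real.sqrt (2*π) := Real.sqrt_pos.mpr (by positivity)

lemma exp_two_le : Real.exp 2 ≤ 7.39 := by
  have h := Real.exp_one_lt_d9
  have h0 := Real.exp_pos 1
  have h2 : Real.exp 2 = Real.exp 1 * Real.exp 1 := by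
    rw [← Real.exp_add]; norm_num
  nlinarith

lemma myPdf_two : 1/20 ≤ myPdf 2 := by
  unfold myPdf
  have h1 := sqrt2pi_le
  have h2 := sqrt2pi_pos
  have h3 := exp_two_le
  have h4 := Real.exp_pos 2
  rw [show (-(2:ℝ)^2/2) = -2 by norm_num, Real.exp_neg]
  have key : Real.sqrt (2*π) * Real.exp 2 ≤ 20 := by nlinarith
  have e1 : (Real.sqrt (2*π))⁻¹ * (Real.exp 2)⁻¹ = (Real.sqrt (2*π) * Real.exp 2)⁻¹ := by
    rw [mul_inv]
  rw [e1, one_div]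
  exact inv_anti₀ (by positivity) key

lemma term_bound (M : ℝ) (hM : 0 ≤ M) (k : ℕ) :
    (M / L k) * (2 * Real.exp (-(2*L k)^2/2 - 1) / (2 * L k)) ≤ M * ((((k:ℝ)+1+3)^2)⁻¹) := by
  have hL := L_pos k
  have hL1 := one_le_L k
  have hexp : Real.exp (-(2*L k)^2/2 - 1) ≤ (((k:ℝ)+1+3)^2)⁻¹ := by
    have h1 : Real.exp (-(2*L k)^2/2 - 1) ≤ Real.exp (-(2 * L k ^2)) := by
      apply Real.exp_le_exp.mpr
      nlinarith
    have h2 : Real.exp (-(2 * L k^2)) = ((((k:ℝ)+1+3))^2)⁻¹ := by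
      rw [show -(2*L k^2) = -(L k^2) + -(L k^2) by ring, Real.exp_add, Real.exp_neg, exp_L_sq,
        ← mul_inv, ← sq]
    linarith [h2 ▸ h1]
  have heq : (M / L k) * (2 * Real.exp (-(2*L k)^2/2 - 1) / (2 * L k))
      = M * Real.exp (-(2*L k)^2/2 - 1) / (L k)^2 := by
    field_simp
  rw [heq]
  have h3 : M * Real.exp (-(2*L k)^2/2 - 1) / (L k)^2 ≤ M * Real.exp (-(2*L k)^2/2 - 1) := by
    apply div_le_self (by positivity)
    nlinarith
  exact h3.trans (mul_le_mul_of_nonneg_left hexp hM)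

lemma numeric_lb (u : ℝ) (hu : 256 ≤ u) :
    1 ≤ (Real.exp u - 3) * ((Real.sqrt (2*π))⁻¹ * Real.exp (-(u/128))) := by
  have he : u + 1 ≤ Real.exp u := Real.add_one_le_exp u
  have h6 : 6 ≤ Real.exp u := by linarith
  have hhalf : Real.exp u / 2 ≤ Real.exp u - 3 := by linarith
  have hs : (3:ℝ)⁻¹ ≤ (Real.sqrt (2*π))⁻¹ :=
    inv_anti₀ sqrt2pi_pos (by linarith [sqrt2pi_le])
  have hprod : Real.exp u * Real.exp (-(u/128)) = Real.exp (u - u/128) := by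
    rw [← Real.exp_add]; ring_nf
  have hmono : Real.exp 128 ≤ Real.exp (u - u/128) := Real.exp_le_exp.mpr (by linarith)
  have h128 : (129:ℝ) ≤ Real.exp 128 := by linarith [Real.add_one_le_exp (128:ℝ)]
  have hd : 0 < Real.exp (-(u/128)) := Real.exp_pos _
  calc (1:ℝ) ≤ Real.exp (u - u/128)/6 := by linarith
    _ = (Real.exp u/2) * ((3:ℝ)⁻¹ * Real.exp (-(u/128))) := by rw [← hprod]; ring
    _ ≤ (Real.exp u - 3) * ((3:ℝ)⁻¹ * Real.exp (-(u/128))) :=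
        mul_le_mul_of_nonneg_right hhalf (by positivity)
    _ ≤ (Real.exp u - 3) * ((Real.sqrt (2*π))⁻¹ * Real.exp (-(u/128))) := by
        refine mul_le_mul_of_nonneg_left ?_ (by linarith : (0:ℝ) ≤ Real.exp u - 3)
        exact mul_le_mul_of_nonneg_right hs hd.le

lemma half_le_one_sub (x : ℝ) (hx : x ≤ Real.exp (-1)) : x ≤ 1/2 := by
  have h := Real.add_one_le_exp (1:ℝ)
  have h2 : Real.exp (-1) = (Real.exp 1)⁻¹ := Real.exp_neg 1
  have h3 : (Real.exp 1)⁻¹ ≤ 1/2 := by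
    rw [inv_le_comm₀ (Real.exp_pos 1) (by norm_num)]
    linarith
  linarith

/-! ### A generic integral lower bound -/

lemma lower_aux {Ω : Type} [MeasurableSpace Ω] (μ : Measure Ω) [IsProbabilityMeasure μ]
    (Y : Ω → ℝ) (hY : Integrable Y μ) (hY0 : ∀ ω, 0 ≤ Y ω)
    (E : Set Ω) (hE : MeasurableSet E) (c : ℝ) (hc : ∀ ω ∈ E, c ≤ Y ω) :
    c * (μ E).toReal ≤ ∫ ω, Y ω ∂μ :=
  (setIntegral_ge_of_const_le_real hE (measure_ne_top μ E) hc hY.integrableOn).trans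
    (setIntegral_le_integral hY (Filter.Eventually.of_forall hY0))

/-! ### Main theorem -/

theorem expected_max_gaussian :
    ∃ c C : ℝ, 0 < c ∧ 0 < C ∧
      ∀ (n : ℕ), 0 < n →
      ∀ (a : Fin n → ℝ)
        (Ω : Type) (_ : MeasurableSpace Ω) (μ : Measure Ω) (_ : IsProbabilityMeasure μ)
        (g : Fin n → Ω → ℝ),
        (∀ i, Measurable (g i)) →
        (∀ i, μ.map (g i) = gaussianReal 0 1) →
        iIndepFun g μ →
        -- `astar` is the decreasing rearrangement of `(|a i|)`
        ∀ (astar : Fin n → ℝ) (σ : Equiv.Perm (Fin n)),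
          Antitone astar → (∀ i, astar i = |a (σ i)|) →
          c * (⨆ i : Fin n, Real.sqrt (Real.log ((i : ℕ) + 1 + 3)) * astar i)
              ≤ ∫ ω, ⨆ i, |a i * g i ω| ∂μ ∧
          (∫ ω, ⨆ i, |a i * g i ω| ∂μ)
              ≤ C * ⨆ i : Fin n, Real.sqrt (Real.log ((i : ℕ) + 1 + 3)) * astar i := by
  refine ⟨1/320, 3, by norm_num, by norm_num, ?_⟩
  intro n hn a Ω mΩ μ hμ g hgm hglaw hgind astar σ hanti hastar
  haveI : NeZero n := ⟨hn.ne'⟩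
  haveI : Nonempty (Fin n) := ⟨⟨0, hn⟩⟩
  -- notation
  set Y : Ω → ℝ := fun ω => ⨆ i, |a i * g i ω| with hYdef
  have hLrepl : ∀ i : Fin n, Real.sqrt (Real.log ((i : ℕ) + 1 + 3)) = L (i : ℕ) := fun i => rfl
  set M : ℝ := ⨆ i : Fin n, Real.sqrt (Real.log ((i : ℕ) + 1 + 3)) * astar i with hMdef
  have hastar0 : ∀ i, 0 ≤ astar i := fun i => (hastar i) ▸ abs_nonneg _
  have hMbdd : BddAbove (Set.range fun i : Fin n =>
      Real.sqrt (Real.log ((i : ℕ) + 1 + 3)) * astar i) :=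
    (Set.finite_range _).bddAbove
  have hM_le : ∀ i : Fin n, L (i : ℕ) * astar i ≤ M := fun i => le_ciSup hMbdd i
  have hM0 : 0 ≤ M := by
    refine le_trans ?_ (hM_le ⟨0, hn⟩)
    have := hastar0 ⟨0, hn⟩
    have := (L_pos 0).le
    positivity
  -- measurability and integrability of Y
  have hbdd : ∀ ω, BddAbove (Set.range fun i : Fin n => |a i * g i ω|) :=
    fun ω => (Set.finite_range _).bddAbove
  have hYrep : Y = fun ω => Finset.univ.sup' Finset.univ_nonempty
      (fun i : Fin n => |a i * g i ω|) := by
    funext ω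
    rw [hYdef]
    exact (Finset.sup'_univ_eq_ciSup _).symm
  have hYmeas : Measurable Y := by
    rw [hYrep]
    have h := Finset.measurable_sup' (f := fun (i : Fin n) (ω : Ω) => |a i * g i ω|)
      Finset.univ_nonempty (fun i _ => (measurable_const.mul (hgm i)).abs)
    have heq : (Finset.univ.sup' Finset.univ_nonempty fun (i : Fin n) (ω : Ω) => |a i * g i ω|)
        = fun ω => Finset.univ.sup' Finset.univ_nonempty fun (i : Fin n) => |a i * g i ω| := by
      funext ω
      exact Finset.sup'_apply Finset.univ_nonempty _ ω
    rwa [heq] at h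
  have habs_int : ∀ i : Fin n, Integrable (fun ω => |g i ω|) μ := by
    intro i
    have h1 : Integrable (fun x : ℝ => |x|) (gaussianReal 0 1) := by
      refine Integrable.mono' ((gauss_mgf_integrable 1).add (gauss_mgf_integrable (-1)))
        continuous_abs.aestronglyMeasurable (Filter.Eventually.of_forall fun x => ?_)
      rw [Real.norm_eq_abs, abs_abs]
      have h2 : |x| ≤ Real.exp |x| := le_trans (by linarith [Real.add_one_le_exp |x|]) le_rfl
      have h3 : Real.exp |x| ≤ Real.exp (1*x) + Real.exp (-1*x) := by
        rcases abs_cases x with ⟨h, _⟩ | ⟨h, _⟩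
        · rw [h]
          nlinarith [Real.exp_pos (-1*x), Real.exp_le_exp.mpr (le_of_eq (one_mul x).symm)]
        · rw [h]
          nlinarith [Real.exp_pos (1*x), Real.exp_le_exp.mpr (le_of_eq (neg_one_mul x).symm)]
      simp only [Pi.add_apply]
      linarith
    have := (integrable_map_measure continuous_abs.aestronglyMeasurable
      (hgm i).aemeasurable).mp (by rwa [hglaw i])
    exact this
  have hYint : Integrable Y μ := by
    refine Integrable.mono' (integrable_finset_sum Finset.univ
      (fun i _ => ((habs_int i).const_mul |a i|))) hYmeas.aestronglyMeasurable
      (Filter.Eventually.of_forall fun ω => ?_)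
    have hY0 : 0 ≤ Y ω := le_trans (abs_nonneg _) (le_ciSup (hbdd ω) ⟨0, hn⟩)
    rw [Real.norm_eq_abs, abs_of_nonneg hY0]
    refine ciSup_le fun i => ?_
    rw [abs_mul]
    exact Finset.single_le_sum (f := fun j => |a j| * |g j ω|)
      (fun j _ => by positivity) (Finset.mem_univ i)
  have hY0 : ∀ ω, 0 ≤ Y ω := fun ω => le_trans (abs_nonneg _) (le_ciSup (hbdd ω) ⟨0, hn⟩)
  constructor
  · -- LOWER BOUND
    have hint_nonneg : 0 ≤ ∫ ω, Y ω ∂μ := integral_nonneg hY0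
    have key : ∀ k : Fin n, Real.sqrt (Real.log ((k : ℕ) + 1 + 3)) * astar k
        ≤ 320 * ∫ ω, Y ω ∂μ := by
      intro k
      rw [hLrepl k]
      by_cases h16 : L (k:ℕ) ≤ 16
      · -- small case
        set E : Set Ω := g (σ k) ⁻¹' {x | 1 ≤ |x|} with hE
        have hAmeas : MeasurableSet {x : ℝ | 1 ≤ |x|} :=
          measurableSet_le measurable_const measurable_abs
        have hEmeas : MeasurableSet E := (hgm (σ k)) hAmeas
        have hc : ∀ ω ∈ E, astar k ≤ Y ω := by
          intro ω hω
          have hω' : 1 ≤ |g (σ k) ω| := hω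
          calc astar k = astar k * 1 := (mul_one _).symm
            _ ≤ astar k * |g (σ k) ω| := mul_le_mul_of_nonneg_left hω' (hastar0 k)
            _ = |a (σ k) * g (σ k) ω| := by rw [abs_mul, ← hastar k]
            _ ≤ Y ω := le_ciSup (hbdd ω) (σ k)
        have hmeasE : 1/20 ≤ (μ E).toReal := by
          have hEeq : μ E = gaussianReal 0 1 {x | 1 ≤ |x|} := by
            rw [hE, ← Measure.map_apply (hgm (σ k)) hAmeas, hglaw]
          rw [hEeq]
          calc (1:ℝ)/20 ≤ myPdf 2 := myPdf_two
            _ = myPdf (1+1) := by norm_num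
            _ ≤ _ := tail_lower 1 zero_le_one
        have hlow := lower_aux μ Y hYint hY0 E hEmeas (astar k) hc
        have h2 : astar k * (1/20) ≤ astar k * (μ E).toReal :=
          mul_le_mul_of_nonneg_left hmeasE (hastar0 k)
        have h3 : L (k:ℕ) * astar k ≤ 16 * astar k :=
          mul_le_mul_of_nonneg_right h16 (hastar0 k)
        linarith
      · -- big case
        push_neg at h16
        obtain ⟨t, ht⟩ : ∃ t : ℝ, t = L (k:ℕ)/8 - 1 := ⟨_, rfl⟩
        have ht1 : 1 ≤ t := by rw [ht]; linarith
        have ht0 : 0 ≤ t := by linarith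
        have hAmeas : MeasurableSet {x : ℝ | |x| < t} :=
          measurableSet_lt measurable_abs measurable_const
        set S : Finset (Fin n) := (Finset.Iic k).image σ with hS
        set s : Fin n → Set Ω := fun i => g i ⁻¹' {x | |x| < t} with hs
        have hsmeas : ∀ i, MeasurableSet (s i) := fun i => (hgm i) hAmeas
        have hprod : μ (⋂ i ∈ S, s i) = ∏ i ∈ S, μ (s i) :=
          hgind.meas_biInter (fun i _ => ⟨{x | |x| < t}, hAmeas, rfl⟩)
        have hQ : ∀ i, μ (s i) = gaussianReal 0 1 {x | |x| < t} := fun i => by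
          rw [hs]; rw [← Measure.map_apply (hgm i) hAmeas, hglaw]
        set Q : ℝ≥0∞ := gaussianReal 0 1 {x | |x| < t} with hQdef
        have hcard : S.card = (k:ℕ) + 1 := by
          rw [hS, Finset.card_image_of_injective _ σ.injective, Fin.card_Iic]
        have hprodQ : μ (⋂ i ∈ S, s i) = Q ^ ((k:ℕ)+1) := by
          rw [hprod, Finset.prod_congr rfl (fun i _ => hQ i), Finset.prod_const, hcard]
        set P : ℝ := ((gaussianReal 0 1) {x | t ≤ |x|}).toReal with hP
        have hPtail : myPdf (t+1) ≤ P := tail_lower t ht0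
        have htailmeas : MeasurableSet {x : ℝ | t ≤ |x|} :=
          measurableSet_le measurable_const measurable_abs
        have hcompl : {x : ℝ | |x| < t} = {x : ℝ | t ≤ |x|}ᶜ := by
          ext x; simp [not_le]
        have hQtoReal : Q.toReal = 1 - P := by
          rw [hQdef, hcompl, measure_compl htailmeas (measure_ne_top _ _), measure_univ,
            ENNReal.toReal_sub_of_le prob_le_one ENNReal.one_ne_top, ENNReal.toReal_one]
        have hP0 : 0 ≤ P := ENNReal.toReal_nonneg
        have hmP : 1 ≤ (((k:ℕ):ℝ)+1) * P := by
          have hu : 256 ≤ L (k:ℕ)^2 := by nlinarith [L_pos (k:ℕ)]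
          have hnum := numeric_lb (L (k:ℕ)^2) hu
          have hk1 : ((k:ℕ):ℝ) + 1 = Real.exp (L (k:ℕ)^2) - 3 := by
            rw [exp_L_sq]; ring
          have htL : t + 1 = L (k:ℕ)/8 := by rw [ht]; ring
          have hpdf : myPdf (t+1) = (Real.sqrt (2*π))⁻¹ * Real.exp (-(L (k:ℕ)^2/128)) := by
            unfold myPdf
            rw [htL]
            congr 1
            congr 1
            ring
          calc (1:ℝ) ≤ (Real.exp (L (k:ℕ)^2) - 3) *
                ((Real.sqrt (2*π))⁻¹ * Real.exp (-(L (k:ℕ)^2/128))) := hnum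
            _ = (((k:ℕ):ℝ)+1) * myPdf (t+1) := by rw [hk1, hpdf]
            _ ≤ (((k:ℕ):ℝ)+1) * P := by
                refine mul_le_mul_of_nonneg_left hPtail ?_
                positivity
        have hEc : (μ (⋂ i ∈ S, s i)).toReal ≤ 1/2 := by
          rw [hprodQ, ENNReal.toReal_pow]
          have h1 : Q.toReal ≤ Real.exp (-P) := by
            rw [hQtoReal]
            linarith [Real.add_one_le_exp (-P)]
          have h2 : Q.toReal ^ ((k:ℕ)+1) ≤ Real.exp (-P) ^ ((k:ℕ)+1) :=
            pow_le_pow_left₀ ENNReal.toReal_nonneg h1 _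
          have h3 : Real.exp (-P) ^ ((k:ℕ)+1) = Real.exp (-((((k:ℕ):ℝ)+1) * P)) := by
            rw [← Real.exp_nat_mul]
            congr 1
            push_cast
            ring
          have h4 : Real.exp (-((((k:ℕ):ℝ)+1) * P)) ≤ Real.exp (-1) :=
            Real.exp_le_exp.mpr (by linarith)
          exact half_le_one_sub _ (by rw [h3] at h2; linarith)
        set E : Set Ω := (⋂ i ∈ S, s i)ᶜ with hEdef
        have hinter : MeasurableSet (⋂ i ∈ S, s i) :=
          Finset.measurableSet_biInter S (fun i _ => hsmeas i)
        have hEmeas : MeasurableSet E := hinter.compl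
        have hmuE : 1/2 ≤ (μ E).toReal := by
          rw [hEdef, measure_compl hinter (measure_ne_top _ _), measure_univ,
            ENNReal.toReal_sub_of_le prob_le_one ENNReal.one_ne_top, ENNReal.toReal_one]
          linarith
        have hc : ∀ ω ∈ E, astar k * t ≤ Y ω := by
          intro ω hω
          rw [hEdef, Set.mem_compl_iff] at hω
          simp only [Set.mem_iInter, not_forall] at hω
          obtain ⟨i, hiS, hnot⟩ := hω
          rw [hS] at hiS
          obtain ⟨j, hjk, rfl⟩ := Finset.mem_image.mp hiS
          have hjle : j ≤ k := Finset.mem_Iic.mp hjk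
          have hti : t ≤ |g (σ j) ω| := not_lt.mp hnot
          have hastarj : astar k ≤ astar j := hanti hjle
          calc astar k * t ≤ astar j * |g (σ j) ω| :=
                mul_le_mul hastarj hti ht0 (hastar0 j)
            _ = |a (σ j) * g (σ j) ω| := by rw [abs_mul, ← hastar j]
            _ ≤ Y ω := le_ciSup (hbdd ω) (σ j)
        have hlow := lower_aux μ Y hYint hY0 E hEmeas (astar k * t) hc
        have h1 : astar k * t * (1/2) ≤ astar k * t * (μ E).toReal :=
          mul_le_mul_of_nonneg_left hmuE (mul_nonneg (hastar0 k) ht0)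
        have h2 : L (k:ℕ)/16 ≤ t := by rw [ht]; linarith
        have h3 : astar k * (L (k:ℕ)/16) ≤ astar k * t :=
          mul_le_mul_of_nonneg_left h2 (hastar0 k)
        have h4 : astar k * t ≤ 2 * ∫ ω, Y ω ∂μ := by linarith
        have h5 : astar k * L (k:ℕ) ≤ 16 * (astar k * t) := by linarith
        calc L (k:ℕ) * astar k = astar k * L (k:ℕ) := mul_comm _ _
          _ ≤ 32 * ∫ ω, Y ω ∂μ := by linarith
          _ ≤ 320 * ∫ ω, Y ω ∂μ := by linarith
    have hsup : M ≤ 320 * ∫ ω, Y ω ∂μ := ciSup_le key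
    linarith
  · -- UPPER BOUND
    have hcont : ∀ b : ℝ, Continuous (fun x : ℝ => max (|x| - b) 0) := fun b =>
      (continuous_abs.sub continuous_const).max continuous_const
    have hBint : ∀ j : Fin n,
        Integrable (fun ω => max (|g j ω| - 2 * L ((σ.symm j : Fin n) : ℕ)) 0) μ := by
      intro j
      have hbpos : 0 < 2 * L ((σ.symm j : Fin n) : ℕ) := by
        have := L_pos ((σ.symm j : Fin n) : ℕ); linarith
      exact (integrable_map_measure (hcont _).aestronglyMeasurable
        (hgm j).aemeasurable).mp (by rw [hglaw j]; exact plus_integrable _ hbpos)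
    have hpt : ∀ ω, Y ω ≤ 2*M + ∑ j : Fin n,
        (M / L ((σ.symm j : Fin n) : ℕ)) * max (|g j ω| - 2 * L ((σ.symm j : Fin n) : ℕ)) 0 := by
      intro ω
      refine ciSup_le fun i => ?_
      have hai : |a i| = astar (σ.symm i) := by
        rw [hastar (σ.symm i), Equiv.apply_symm_apply]
      have hLk := L_pos ((σ.symm i : Fin n) : ℕ)
      have h1 : |a i| ≤ M / L ((σ.symm i : Fin n) : ℕ) := by
        rw [le_div_iff₀ hLk, hai, mul_comm]
        exact hM_le (σ.symm i)
      have h2 : |g i ω| ≤ 2 * L ((σ.symm i : Fin n) : ℕ)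
          + max (|g i ω| - 2 * L ((σ.symm i : Fin n) : ℕ)) 0 := by
        linarith [le_max_left (|g i ω| - 2 * L ((σ.symm i : Fin n) : ℕ)) (0:ℝ)]
      have h3 : |a i * g i ω| ≤ (M / L ((σ.symm i : Fin n) : ℕ)) *
          (2 * L ((σ.symm i : Fin n) : ℕ) + max (|g i ω| - 2 * L ((σ.symm i : Fin n) : ℕ)) 0) := by
        rw [abs_mul]
        exact mul_le_mul h1 h2 (abs_nonneg _) (div_nonneg hM0 hLk.le)
      have h4 : (M / L ((σ.symm i : Fin n) : ℕ)) * (2 * L ((σ.symm i : Fin n) : ℕ)) = 2 * M := by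
        field_simp
      have h5 : (M / L ((σ.symm i : Fin n) : ℕ)) *
            max (|g i ω| - 2 * L ((σ.symm i : Fin n) : ℕ)) 0
          ≤ ∑ j : Fin n, (M / L ((σ.symm j : Fin n) : ℕ)) *
            max (|g j ω| - 2 * L ((σ.symm j : Fin n) : ℕ)) 0 :=
        Finset.single_le_sum (f := fun j : Fin n => (M / L ((σ.symm j : Fin n) : ℕ)) *
            max (|g j ω| - 2 * L ((σ.symm j : Fin n) : ℕ)) 0)
          (fun j _ => mul_nonneg (div_nonneg hM0 (L_pos _).le) (le_max_right _ _))
          (Finset.mem_univ i)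
      calc |a i * g i ω| ≤ _ := h3
        _ = 2*M + (M / L ((σ.symm i : Fin n) : ℕ)) *
            max (|g i ω| - 2 * L ((σ.symm i : Fin n) : ℕ)) 0 := by rw [mul_add, h4]
        _ ≤ _ := by linarith
    have hsumint : Integrable (fun ω => ∑ j : Fin n,
        (M / L ((σ.symm j : Fin n) : ℕ)) * max (|g j ω| - 2 * L ((σ.symm j : Fin n) : ℕ)) 0) μ :=
      integrable_finset_sum _ (fun j _ => (hBint j).const_mul _)
    have hint_le : ∫ ω, Y ω ∂μ ≤ ∫ ω, (2*M + ∑ j : Fin n,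
        (M / L ((σ.symm j : Fin n) : ℕ)) * max (|g j ω| - 2 * L ((σ.symm j : Fin n) : ℕ)) 0) ∂μ :=
      integral_mono hYint ((integrable_const _).add hsumint) hpt
    have hRHS : ∫ ω, (2*M + ∑ j : Fin n,
          (M / L ((σ.symm j : Fin n) : ℕ)) * max (|g j ω| - 2 * L ((σ.symm j : Fin n) : ℕ)) 0) ∂μ
        = 2*M + ∑ j : Fin n, (M / L ((σ.symm j : Fin n) : ℕ)) *
          ∫ ω, max (|g j ω| - 2 * L ((σ.symm j : Fin n) : ℕ)) 0 ∂μ := by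
      rw [integral_add (integrable_const _) hsumint, integral_const, probReal_univ,
        one_smul, integral_finset_sum _ (fun j _ => (hBint j).const_mul _)]
      congr 1
      exact Finset.sum_congr rfl fun j _ => integral_const_mul _ _
    have hterm : ∀ j : Fin n, ∫ ω, max (|g j ω| - 2 * L ((σ.symm j : Fin n) : ℕ)) 0 ∂μ
        ≤ 2 * Real.exp (-(2 * L ((σ.symm j : Fin n) : ℕ))^2/2 - 1)
          / (2 * L ((σ.symm j : Fin n) : ℕ)) := by
      intro j
      have hbpos : 0 < 2 * L ((σ.symm j : Fin n) : ℕ) := by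
        have := L_pos ((σ.symm j : Fin n) : ℕ); linarith
      have heq : ∫ ω, max (|g j ω| - 2 * L ((σ.symm j : Fin n) : ℕ)) 0 ∂μ
          = ∫ x, max (|x| - 2 * L ((σ.symm j : Fin n) : ℕ)) 0 ∂(gaussianReal 0 1) := by
        rw [← hglaw j, integral_map (hgm j).aemeasurable (hcont _).aestronglyMeasurable]
      rw [heq]
      exact plus_integral_le _ hbpos
    have hterm2 : ∀ j : Fin n, (M / L ((σ.symm j : Fin n) : ℕ)) *
          ∫ ω, max (|g j ω| - 2 * L ((σ.symm j : Fin n) : ℕ)) 0 ∂μ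
        ≤ M * (((((σ.symm j : Fin n) : ℕ):ℝ)+1+3)^2)⁻¹ := by
      intro j
      refine le_trans ?_ (term_bound M hM0 ((σ.symm j : Fin n) : ℕ))
      exact mul_le_mul_of_nonneg_left (hterm j) (div_nonneg hM0 (L_pos _).le)
    have hsum2 : ∑ j : Fin n, M * (((((σ.symm j : Fin n) : ℕ):ℝ)+1+3)^2)⁻¹ ≤ M * (1/3) := by
      have hre : ∑ j : Fin n, M * (((((σ.symm j : Fin n) : ℕ):ℝ)+1+3)^2)⁻¹
          = ∑ j : Fin n, M * ((((j : ℕ):ℝ)+1+3)^2)⁻¹ :=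
        Equiv.sum_comp σ.symm (fun j : Fin n => M * ((((j : ℕ):ℝ)+1+3)^2)⁻¹)
      rw [hre, ← Finset.mul_sum]
      refine mul_le_mul_of_nonneg_left ?_ hM0
      have := sum_inv_sq n
      have hconv : ∑ j : Fin n, ((((j : ℕ):ℝ)+1+3)^2)⁻¹
          = ∑ i ∈ Finset.range n, (((i:ℝ) + 4) ^ 2)⁻¹ := by
        rw [Fin.sum_univ_eq_sum_range (fun i => ((((i : ℕ):ℝ)+1+3)^2)⁻¹) n]
        exact Finset.sum_congr rfl fun i _ => by rw [show ((i:ℝ)+1+3) = (i:ℝ)+4 by ring]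
      rw [hconv]
      linarith
    have hfinal : ∫ ω, Y ω ∂μ ≤ 2*M + M * (1/3) := by
      rw [hRHS] at hint_le
      refine hint_le.trans ?_
      have := Finset.sum_le_sum (fun j (_ : j ∈ Finset.univ) => hterm2 j)
      linarith [hsum2]
    linarith
end

section
/- Let 1 < p* ≤ 2 and let n be a positive integer. Then for all x, y ∈ ℝ^n one has ‖(x+y)/2‖_{p*}^2 + (p*(p*−1)/8) · ‖(x−y)/2‖_{p*}^2 ≤ ( ‖x‖_{p*}^2 + ‖y‖_{p*}^2 ) / 2, where ‖·‖_{p*} denotes the ℓ_{p*}-norm on ℝ^n. In particular, ℓ_{p*}^n has modulus of convexity of power type 2 with constant λ satisfying λ^{−2} = p*(p*−1)/8. -/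
open Real Finset

section ClarksonAux

lemma lemA {p : ℝ} (hp1 : 1 < p) (hp2 : p ≤ 2) {t : ℝ} (ht0 : 0 ≤ t) (ht1 : t ≤ 1) :
    ((1 + t) / 2) ^ p + (p * (p - 1) / 8) * (1 - t) ^ 2 ≤ (1 + t ^ p) / 2 := by
  set c : ℝ := p * (p - 1) / 2 with hc
  have hconv : ConvexOn ℝ (Set.Icc (0:ℝ) 1) (fun x : ℝ => x ^ p - c * (x * x)) := by
    have hD : Convex ℝ (Set.Icc (0:ℝ) 1) := convex_Icc 0 1
    refine convexOn_of_hasDerivWithinAt2_nonneg hD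
      (f' := fun x => p * x ^ (p - 1) - c * (1 * x + x * 1))
      (f'' := fun x => p * ((p - 1) * x ^ (p - 1 - 1)) - c * (1 * 1 + 1 * 1)) ?_ ?_ ?_ ?_
    · apply ContinuousOn.sub
      · exact fun x _ =>
          (Real.continuousAt_rpow_const x p (Or.inr (by linarith))).continuousWithinAt
      · fun_prop
    · intro x hx
      rw [interior_Icc] at hx
      exact ((Real.hasDerivAt_rpow_const (Or.inl (ne_of_gt hx.1))).sub
        (((hasDerivAt_id x).mul (hasDerivAt_id x)).const_mul c)).hasDerivWithinAt
    · intro x hx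
      rw [interior_Icc] at hx
      exact (((Real.hasDerivAt_rpow_const (p := p - 1) (Or.inl (ne_of_gt hx.1))).const_mul p).sub
        ((((hasDerivAt_id x).const_mul (1:ℝ)).add ((hasDerivAt_id x).mul_const (1:ℝ))) |>.const_mul c)).hasDerivWithinAt
    · intro x hx
      rw [interior_Icc] at hx
      have h1 : (1:ℝ) ≤ x ^ (p - 1 - 1) :=
        Real.one_le_rpow_of_pos_of_le_one_of_nonpos hx.1 hx.2.le (by linarith)
      have hpp : 0 ≤ p * (p - 1) := by nlinarith
      have h2 : p * (p-1) ≤ p * ((p-1) * x ^ (p-1-1)) := by nlinarith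
      simp only [hc]
      nlinarith
  have h1 : (1:ℝ) ∈ Set.Icc (0:ℝ) 1 := by constructor <;> norm_num
  have h2 : t ∈ Set.Icc (0:ℝ) 1 := ⟨ht0, ht1⟩
  have key := hconv.2 h1 h2 (by norm_num : (0:ℝ) ≤ 1/2) (by norm_num : (0:ℝ) ≤ 1/2)
    (by norm_num : (1/2:ℝ) + 1/2 = 1)
  simp only [smul_eq_mul, Real.one_rpow] at key
  have hmid : (1/2 : ℝ) * 1 + (1/2) * t = (1 + t)/2 := by ring
  rw [hmid] at key
  nlinarith [key]

lemma lemB {p : ℝ} (hp1 : 1 < p) (hp2 : p ≤ 2) {t : ℝ} (ht0 : 0 ≤ t) (ht1 : t ≤ 1) :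
    (((1 + t) / 2) ^ 2 + (p * (p - 1) / 8) * ((1 - t) / 2) ^ 2) ^ (p / 2)
      ≤ (1 + t ^ p) / 2 := by
  set K : ℝ := p * (p - 1) / 8 with hKdef
  set A : ℝ := ((1 + t) / 2) ^ 2 with hAdef
  set w : ℝ := K * ((1 - t) / 2) ^ 2 with hwdef
  have hK0 : 0 ≤ K := by rw [hKdef]; nlinarith
  have hq : (0:ℝ) < (1 + t) / 2 := by linarith
  have hA : (0:ℝ) < A := by rw [hAdef]; positivity
  have hw : 0 ≤ w := mul_nonneg hK0 (sq_nonneg _)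
  have hwA : 0 ≤ w / A := div_nonneg hw hA.le
  have hber : (1 + w / A) ^ (p / 2) ≤ 1 + (p / 2) * (w / A) :=
    rpow_one_add_le_one_add_mul_self (by linarith) (by linarith) (by linarith)
  have e1 : A + w = A * (1 + w / A) := by field_simp
  have e2 : (A + w) ^ (p / 2) = A ^ (p / 2) * (1 + w / A) ^ (p / 2) := by
    rw [e1, Real.mul_rpow hA.le (by linarith)]
  have hApow : A ^ (p / 2) = ((1 + t) / 2) ^ p := by
    rw [hAdef, ← Real.rpow_natCast ((1 + t) / 2) 2, ← Real.rpow_mul hq.le]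
    norm_num
    congr 1
    ring
  have hApow' : A ^ (p / 2 - 1) = A ^ (p / 2) / A := by
    rw [Real.rpow_sub hA, Real.rpow_one]
  have hle1 : (A + w) ^ (p / 2) ≤ A ^ (p / 2) + (p / 2) * w * A ^ (p / 2 - 1) := by
    rw [e2]
    have h := mul_le_mul_of_nonneg_left hber (Real.rpow_nonneg hA.le (p / 2))
    calc A ^ (p / 2) * (1 + w / A) ^ (p / 2) ≤ A ^ (p / 2) * (1 + p / 2 * (w / A)) := h
      _ = A ^ (p / 2) + (p / 2) * w * (A ^ (p / 2) / A) := by field_simp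
      _ = A ^ (p / 2) + (p / 2) * w * A ^ (p / 2 - 1) := by rw [hApow']
  have hA2 : A ^ (p / 2 - 1) ≤ 2 := by
    have h14 : (1/4 : ℝ) ≤ A := by rw [hAdef]; nlinarith
    have hmono : A ^ (p / 2 - 1) ≤ (1/4 : ℝ) ^ (p / 2 - 1) :=
      Real.rpow_le_rpow_of_nonpos (by norm_num) h14 (by linarith)
    have h24 : (1/4 : ℝ) = (2:ℝ) ^ ((-2 : ℤ) : ℝ) := by
      rw [Real.rpow_intCast]; norm_num
    have h2 : ((1/4:ℝ)) ^ (p / 2 - 1) = (2:ℝ) ^ ((-2 : ℝ) * (p / 2 - 1)) := by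
      rw [h24, ← Real.rpow_mul (by norm_num)]; norm_num
    have h3 : (2:ℝ) ^ ((-2 : ℝ) * (p / 2 - 1)) ≤ (2:ℝ) ^ (1:ℝ) :=
      Real.rpow_le_rpow_of_exponent_le (by norm_num) (by linarith)
    rw [Real.rpow_one] at h3
    linarith [hmono, h2 ▸ hmono, h3, h2.symm ▸ h3]
  have hkey := lemA hp1 hp2 ht0 ht1
  have hterm : (p / 2) * w * A ^ (p / 2 - 1) ≤ (p / 2) * w * 2 := by
    have : 0 ≤ (p / 2) * w := mul_nonneg (by linarith) hw
    exact mul_le_mul_of_nonneg_left hA2 this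
  have hfin : (p / 2) * w * 2 ≤ K * (1 - t) ^ 2 := by
    have h := mul_nonneg (mul_nonneg (mul_nonneg (by linarith : (0:ℝ) ≤ p)
      (by linarith : (0:ℝ) ≤ p - 1)) (by linarith : (0:ℝ) ≤ 4 - p)) (sq_nonneg (1 - t))
    rw [hwdef, hKdef]; nlinarith [h]
  calc (A + w) ^ (p / 2) ≤ A ^ (p / 2) + (p / 2) * w * A ^ (p / 2 - 1) := hle1
    _ ≤ ((1 + t) / 2) ^ p + (p / 2) * w * 2 := by rw [hApow]; linarith
    _ ≤ ((1 + t) / 2) ^ p + K * (1 - t) ^ 2 := by linarith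
    _ ≤ (1 + t ^ p) / 2 := by rw [hKdef]; exact hkey

lemma lemB' {p : ℝ} (hp1 : 1 < p) (hp2 : p ≤ 2) {α β : ℝ} (hβ0 : 0 ≤ β) (hβα : β ≤ α) :
    (((α + β) / 2) ^ 2 + (p * (p - 1) / 8) * ((α - β) / 2) ^ 2) ^ (p / 2)
      ≤ (α ^ p + β ^ p) / 2 := by
  have hα0 : 0 ≤ α := le_trans hβ0 hβα
  rcases eq_or_lt_of_le hα0 with h0 | hαpos
  · have hβ : β = 0 := le_antisymm (h0 ▸ hβα) hβ0
    rw [← h0, hβ]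
    norm_num
    rw [Real.zero_rpow (by positivity), Real.zero_rpow (by positivity)]
  · set t : ℝ := β / α with htdef
    have ht0 : 0 ≤ t := div_nonneg hβ0 hα0
    have ht1 : t ≤ 1 := (div_le_one hαpos).2 hβα
    have hβeq : β = α * t := by rw [htdef]; field_simp
    have key := lemB hp1 hp2 ht0 ht1
    have hX0 : 0 ≤ ((1 + t) / 2) ^ 2 + (p * (p - 1) / 8) * ((1 - t) / 2) ^ 2 := by
      have : 0 ≤ p * (p - 1) / 8 := by nlinarith
      positivity
    have hsq : (0:ℝ) ≤ α ^ 2 := sq_nonneg α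
    have hsplit : ((α + β) / 2) ^ 2 + (p * (p - 1) / 8) * ((α - β) / 2) ^ 2
        = α ^ 2 * (((1 + t) / 2) ^ 2 + (p * (p - 1) / 8) * ((1 - t) / 2) ^ 2) := by
      rw [hβeq]; ring
    have hα2 : (α ^ 2 : ℝ) ^ (p / 2) = α ^ p := by
      rw [← Real.rpow_natCast α 2, ← Real.rpow_mul hα0]
      norm_num
      congr 1
      ring
    have hmul : (α ^ 2 * (((1 + t) / 2) ^ 2 + (p * (p - 1) / 8) * ((1 - t) / 2) ^ 2)) ^ (p / 2)
        = α ^ p * ((((1 + t) / 2) ^ 2 + (p * (p - 1) / 8) * ((1 - t) / 2) ^ 2) ^ (p / 2)) := by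
      rw [Real.mul_rpow hsq hX0, hα2]
    have htp : (α * t) ^ p = α ^ p * t ^ p := Real.mul_rpow hα0 ht0
    rw [hsplit, hmul]
    calc α ^ p * ((((1 + t) / 2) ^ 2 + (p * (p - 1) / 8) * ((1 - t) / 2) ^ 2) ^ (p / 2))
        ≤ α ^ p * ((1 + t ^ p) / 2) :=
          mul_le_mul_of_nonneg_left key (Real.rpow_nonneg hα0 p)
      _ = (α ^ p + β ^ p) / 2 := by rw [hβeq, htp]; ring

lemma scalar {p : ℝ} (hp1 : 1 < p) (hp2 : p ≤ 2) (a b : ℝ) :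
    (((a + b) / 2) ^ 2 + (p * (p - 1) / 8) * ((a - b) / 2) ^ 2) ^ (p / 2)
      ≤ (|a| ^ p + |b| ^ p) / 2 := by
  set K : ℝ := p * (p - 1) / 8 with hKdef
  have hK0 : 0 ≤ K := by rw [hKdef]; nlinarith
  have hK1 : K ≤ 1 := by rw [hKdef]; nlinarith
  have habs : ((a + b) / 2) ^ 2 + K * ((a - b) / 2) ^ 2
      ≤ ((|a| + |b|) / 2) ^ 2 + K * ((|a| - |b|) / 2) ^ 2 := by
    have h1 : a * b ≤ |a| * |b| := by rw [← abs_mul]; exact le_abs_self _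
    nlinarith [mul_nonneg (by linarith : (0:ℝ) ≤ 1 - K) (by linarith : (0:ℝ) ≤ |a| * |b| - a * b),
      sq_abs a, sq_abs b]
  have hmono : (((a + b) / 2) ^ 2 + K * ((a - b) / 2) ^ 2) ^ (p / 2)
      ≤ (((|a| + |b|) / 2) ^ 2 + K * ((|a| - |b|) / 2) ^ 2) ^ (p / 2) := by
    apply Real.rpow_le_rpow _ habs (by linarith)
    positivity
  rcases le_total |b| |a| with h | h
  · exact hmono.trans (lemB' hp1 hp2 (abs_nonneg b) h)
  · have h2 := lemB' hp1 hp2 (abs_nonneg a) h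
    have he : ((|b| + |a|) / 2) ^ 2 + K * ((|b| - |a|) / 2) ^ 2
        = ((|a| + |b|) / 2) ^ 2 + K * ((|a| - |b|) / 2) ^ 2 := by ring
    rw [he] at h2
    exact hmono.trans (h2.trans (by linarith))

lemma superadd {n : ℕ} {r : ℝ} (hr0 : 0 < r) (hr1 : r ≤ 1) (f g : Fin n → ℝ)
    (hf : ∀ j, 0 ≤ f j) (hg : ∀ j, 0 ≤ g j) :
    ((∑ j, f j ^ r) ^ (1 / r) + (∑ j, g j ^ r) ^ (1 / r)) ^ r
      ≤ ∑ j, (f j + g j) ^ r := by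
  set A : ℝ := (∑ j, f j ^ r) ^ (1 / r) with hAdef
  set B : ℝ := (∑ j, g j ^ r) ^ (1 / r) with hBdef
  have hSf : 0 ≤ ∑ j, f j ^ r := sum_nonneg fun j _ => Real.rpow_nonneg (hf j) r
  have hSg : 0 ≤ ∑ j, g j ^ r := sum_nonneg fun j _ => Real.rpow_nonneg (hg j) r
  have hA0 : 0 ≤ A := Real.rpow_nonneg hSf _
  have hB0 : 0 ≤ B := Real.rpow_nonneg hSg _
  have hAr : A ^ r = ∑ j, f j ^ r := by
    rw [hAdef, ← Real.rpow_mul hSf, one_div, inv_mul_cancel₀ hr0.ne', Real.rpow_one]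
  have hBr : B ^ r = ∑ j, g j ^ r := by
    rw [hBdef, ← Real.rpow_mul hSg, one_div, inv_mul_cancel₀ hr0.ne', Real.rpow_one]
  rcases eq_or_lt_of_le hA0 with hA | hA
  · -- A = 0 : all f j = 0
    have hSf0 : ∑ j, f j ^ r = 0 := by rw [← hAr, ← hA, Real.zero_rpow hr0.ne']
    have hfj : ∀ j ∈ univ, f j ^ r = 0 :=
      (sum_eq_zero_iff_of_nonneg fun j _ => Real.rpow_nonneg (hf j) r).1 hSf0
    have : ∑ j, (f j + g j) ^ r = ∑ j, g j ^ r := by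
      apply sum_congr rfl
      intro j hj
      have : f j = 0 := by
        have h := hfj j hj
        rcases (Real.rpow_eq_zero_iff_of_nonneg (hf j)).1 h with ⟨h1, _⟩
        exact h1
      rw [this, zero_add]
    rw [this, ← hA, zero_add, hBr]
  rcases eq_or_lt_of_le hB0 with hB | hB
  · have hSg0 : ∑ j, g j ^ r = 0 := by rw [← hBr, ← hB, Real.zero_rpow hr0.ne']
    have hgj : ∀ j ∈ univ, g j ^ r = 0 :=
      (sum_eq_zero_iff_of_nonneg fun j _ => Real.rpow_nonneg (hg j) r).1 hSg0
    have : ∑ j, (f j + g j) ^ r = ∑ j, f j ^ r := by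
      apply sum_congr rfl
      intro j hj
      have : g j = 0 := by
        rcases (Real.rpow_eq_zero_iff_of_nonneg (hg j)).1 (hgj j hj) with ⟨h1, _⟩
        exact h1
      rw [this, add_zero]
    rw [this, ← hB, add_zero, hAr]
  -- main case
  have hAB : 0 < A + B := by linarith
  set lam : ℝ := A / (A + B) with hlam
  set mu : ℝ := B / (A + B) with hmu
  have hlam0 : 0 < lam := div_pos hA hAB
  have hmu0 : 0 < mu := div_pos hB hAB
  have hlm : lam + mu = 1 := by rw [hlam, hmu]; field_simp
  have hconc := Real.concaveOn_rpow (le_of_lt hr0) hr1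
  have hpoint : ∀ j, lam ^ (1 - r) * f j ^ r + mu ^ (1 - r) * g j ^ r ≤ (f j + g j) ^ r := by
    intro j
    have h := hconc.2 (Set.mem_Ici.2 (div_nonneg (hf j) hlam0.le))
      (Set.mem_Ici.2 (div_nonneg (hg j) hmu0.le)) hlam0.le hmu0.le hlm
    simp only [smul_eq_mul] at h
    have he : lam * (f j / lam) + mu * (g j / mu) = f j + g j := by
      field_simp
    rw [he] at h
    have hd1 : lam * (f j / lam) ^ r = lam ^ (1 - r) * f j ^ r := by
      rw [Real.div_rpow (hf j) hlam0.le, Real.rpow_sub hlam0, Real.rpow_one]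
      field_simp
    have hd2 : mu * (g j / mu) ^ r = mu ^ (1 - r) * g j ^ r := by
      rw [Real.div_rpow (hg j) hmu0.le, Real.rpow_sub hmu0, Real.rpow_one]
      field_simp
    rw [hd1, hd2] at h
    exact h
  have hsum : lam ^ (1 - r) * A ^ r + mu ^ (1 - r) * B ^ r ≤ ∑ j, (f j + g j) ^ r := by
    calc lam ^ (1 - r) * A ^ r + mu ^ (1 - r) * B ^ r
        = ∑ j, (lam ^ (1 - r) * f j ^ r + mu ^ (1 - r) * g j ^ r) := by
          rw [sum_add_distrib, ← mul_sum, ← mul_sum, hAr, hBr]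
      _ ≤ ∑ j, (f j + g j) ^ r := sum_le_sum fun j _ => hpoint j
  have hid : lam ^ (1 - r) * A ^ r + mu ^ (1 - r) * B ^ r = (A + B) ^ r := by
    rw [hlam, hmu, Real.div_rpow hA0 hAB.le, Real.div_rpow hB0 hAB.le]
    rw [div_mul_eq_mul_div, div_mul_eq_mul_div]
    rw [← Real.rpow_add hA, ← Real.rpow_add hB]
    have h1r : 1 - r + r = 1 := by ring
    rw [h1r, Real.rpow_one, Real.rpow_one]
    rw [← add_div, div_eq_iff (ne_of_gt (Real.rpow_pos_of_pos hAB (1 - r))),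
      ← Real.rpow_add hAB]
    norm_num
  rw [← hid]
  exact hsum

end ClarksonAux

/-- The ℓ_p norm of a vector in ℝ^n, for a real exponent `p`. -/
noncomputable def pnorm (p : ℝ) {n : ℕ} (x : Fin n → ℝ) : ℝ :=
  (∑ j, |x j| ^ p) ^ (1 / p)

theorem clarkson_two_point
    (pstar : ℝ) (hp1 : 1 < pstar) (hp2 : pstar ≤ 2)
    (n : ℕ) (hn : 0 < n) (x y : Fin n → ℝ) :
    pnorm pstar (fun j => (x j + y j) / 2) ^ 2
        + (pstar * (pstar - 1) / 8) * pnorm pstar (fun j => (x j - y j) / 2) ^ 2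
      ≤ (pnorm pstar x ^ 2 + pnorm pstar y ^ 2) / 2 := by
  have hp0 : (0:ℝ) < pstar := by linarith
  have hK0 : (0:ℝ) ≤ pstar * (pstar - 1) / 8 := by nlinarith
  have hr0 : (0:ℝ) < pstar / 2 := by linarith
  have hr1 : pstar / 2 ≤ 1 := by linarith
  have habs2 : ∀ z : ℝ, (z ^ 2 : ℝ) ^ (pstar / 2) = |z| ^ pstar := by
    intro z
    rw [← sq_abs, ← Real.rpow_natCast |z| 2, ← Real.rpow_mul (abs_nonneg z)]
    norm_num
    congr 1
    ring
  -- sums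
  have hSu0 : (0:ℝ) ≤ ∑ j, |(x j + y j) / 2| ^ pstar :=
    sum_nonneg fun j _ => Real.rpow_nonneg (abs_nonneg _) _
  have hSv0 : (0:ℝ) ≤ ∑ j, |(x j - y j) / 2| ^ pstar :=
    sum_nonneg fun j _ => Real.rpow_nonneg (abs_nonneg _) _
  have hSx0 : (0:ℝ) ≤ ∑ j, |x j| ^ pstar :=
    sum_nonneg fun j _ => Real.rpow_nonneg (abs_nonneg _) _
  have hSy0 : (0:ℝ) ≤ ∑ j, |y j| ^ pstar :=
    sum_nonneg fun j _ => Real.rpow_nonneg (abs_nonneg _) _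
  have pnsq : ∀ z : Fin n → ℝ, pnorm pstar z ^ 2 = (∑ j, |z j| ^ pstar) ^ (2 / pstar) := by
    intro z
    have hS : (0:ℝ) ≤ ∑ j, |z j| ^ pstar :=
      sum_nonneg fun j _ => Real.rpow_nonneg (abs_nonneg _) _
    rw [pnorm, ← Real.rpow_natCast ((∑ j, |z j| ^ pstar) ^ (1 / pstar)) 2,
      ← Real.rpow_mul hS]
    norm_num
    congr 1
    ring
  -- superadditivity applied to f j = u j ^ 2, g j = K * v j ^ 2
  have hsa := superadd hr0 hr1 (fun j => ((x j + y j) / 2) ^ 2)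
    (fun j => (pstar * (pstar - 1) / 8) * ((x j - y j) / 2) ^ 2)
    (fun j => sq_nonneg _) (fun j => mul_nonneg hK0 (sq_nonneg _))
  have e1 : (∑ j, (((x j + y j) / 2) ^ 2) ^ (pstar / 2)) ^ (1 / (pstar / 2))
      = (∑ j, |(x j + y j) / 2| ^ pstar) ^ (2 / pstar) := by
    rw [sum_congr rfl fun j _ => habs2 ((x j + y j) / 2)]
    congr 1
    field_simp
  have e2 : (∑ j, ((pstar * (pstar - 1) / 8) * ((x j - y j) / 2) ^ 2) ^ (pstar / 2))
        ^ (1 / (pstar / 2))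
      = (pstar * (pstar - 1) / 8) * (∑ j, |(x j - y j) / 2| ^ pstar) ^ (2 / pstar) := by
    have hs : ∑ j, ((pstar * (pstar - 1) / 8) * ((x j - y j) / 2) ^ 2) ^ (pstar / 2)
        = (pstar * (pstar - 1) / 8) ^ (pstar / 2) * ∑ j, |(x j - y j) / 2| ^ pstar := by
      rw [mul_sum]
      exact sum_congr rfl fun j _ => by
        rw [Real.mul_rpow hK0 (sq_nonneg _), habs2 ((x j - y j) / 2)]
    rw [hs, Real.mul_rpow (Real.rpow_nonneg hK0 _) hSv0, ← Real.rpow_mul hK0]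
    rw [mul_one_div, div_self hr0.ne', Real.rpow_one]
    congr 1
    field_simp
  have hscal : ∀ j : Fin n, (((x j + y j) / 2) ^ 2
        + (pstar * (pstar - 1) / 8) * ((x j - y j) / 2) ^ 2) ^ (pstar / 2)
      ≤ (|x j| ^ pstar + |y j| ^ pstar) / 2 := fun j => scalar hp1 hp2 (x j) (y j)
  have hsum : ∑ j, (((x j + y j) / 2) ^ 2
        + (pstar * (pstar - 1) / 8) * ((x j - y j) / 2) ^ 2) ^ (pstar / 2)
      ≤ ((∑ j, |x j| ^ pstar) + ∑ j, |y j| ^ pstar) / 2 := by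
    calc ∑ j, (((x j + y j) / 2) ^ 2
          + (pstar * (pstar - 1) / 8) * ((x j - y j) / 2) ^ 2) ^ (pstar / 2)
        ≤ ∑ j, (|x j| ^ pstar + |y j| ^ pstar) / 2 := sum_le_sum fun j _ => hscal j
      _ = ((∑ j, |x j| ^ pstar) + ∑ j, |y j| ^ pstar) / 2 := by
          rw [← sum_div, sum_add_distrib]
  rw [e1, e2] at hsa
  set Su : ℝ := ∑ j, |(x j + y j) / 2| ^ pstar with hSu
  set Sv : ℝ := ∑ j, |(x j - y j) / 2| ^ pstar with hSv
  set Sx : ℝ := ∑ j, |x j| ^ pstar with hSx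
  set Sy : ℝ := ∑ j, |y j| ^ pstar with hSy
  have hL0 : (0:ℝ) ≤ Su ^ (2 / pstar) + (pstar * (pstar - 1) / 8) * Sv ^ (2 / pstar) :=
    add_nonneg (Real.rpow_nonneg hSu0 _) (mul_nonneg hK0 (Real.rpow_nonneg hSv0 _))
  have hLHS : (Su ^ (2 / pstar) + (pstar * (pstar - 1) / 8) * Sv ^ (2 / pstar)) ^ (pstar / 2)
      ≤ (Sx + Sy) / 2 := hsa.trans hsum
  have hraise : Su ^ (2 / pstar) + (pstar * (pstar - 1) / 8) * Sv ^ (2 / pstar)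
      ≤ ((Sx + Sy) / 2) ^ (2 / pstar) := by
    have h := Real.rpow_le_rpow (Real.rpow_nonneg hL0 _) hLHS
      (le_of_lt (by positivity : (0:ℝ) < 2 / pstar))
    rw [← Real.rpow_mul hL0] at h
    rw [show pstar / 2 * (2 / pstar) = 1 by field_simp] at h
    rw [Real.rpow_one] at h
    exact h
  have hstepC : ((Sx + Sy) / 2) ^ (2 / pstar) ≤ (Sx ^ (2 / pstar) + Sy ^ (2 / pstar)) / 2 := by
    have h2p : (1:ℝ) ≤ 2 / pstar := (one_le_div hp0).2 hp2
    have hcv := (convexOn_rpow h2p).2 (Set.mem_Ici.2 hSx0) (Set.mem_Ici.2 hSy0)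
      (by norm_num : (0:ℝ) ≤ 1/2) (by norm_num : (0:ℝ) ≤ 1/2) (by norm_num : (1/2:ℝ) + 1/2 = 1)
    simp only [smul_eq_mul] at hcv
    calc ((Sx + Sy) / 2) ^ (2 / pstar) = (1/2 * Sx + 1/2 * Sy) ^ (2 / pstar) := by
          congr 1; ring
      _ ≤ 1/2 * Sx ^ (2 / pstar) + 1/2 * Sy ^ (2 / pstar) := hcv
      _ = (Sx ^ (2 / pstar) + Sy ^ (2 / pstar)) / 2 := by ring
  rw [pnsq, pnsq, pnsq, pnsq]
  simp only [← hSu, ← hSv, ← hSx, ← hSy]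
  linarith [hraise, hstepC]
end

section
/- There exists an absolute constant c > 0 such that the following holds. Let m, n be positive integers, let A = (a_{ij}) be a real m×n matrix, let b_i := max_{j≤n} |a_{ij}| for i ≤ m, and let (b_i^*)_{i≤m} denote the decreasing rearrangement of (b_i)_{i≤m}. Then, with g_{ij} independent standard Gaussian random variables, E max_{i≤m, j≤n} |a_{ij} g_{ij}| ≥ c · max_{i≤m} √(log(i+3)) · b_i^*. -/
open MeasureTheory ProbabilityTheory Real
open scoped NNReal ENNReal

lemma MyAux.gaussian_tail_lb {t : ℝ} (ht : 0 ≤ t) :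
    Real.exp (-(t+1)^2/2) / Real.sqrt (2*π) ≤ (gaussianReal 0 1 (Set.Ici t)).toReal := by
  have hC : 0 ≤ Real.exp (-(t+1)^2/2) / Real.sqrt (2*π) := by positivity
  rw [← ENNReal.ofReal_le_iff_le_toReal (measure_ne_top _ _)]
  rw [gaussianReal_apply 0 one_ne_zero]
  calc ENNReal.ofReal (Real.exp (-(t+1)^2/2) / Real.sqrt (2*π))
      = ∫⁻ _ in Set.Icc t (t+1), ENNReal.ofReal (Real.exp (-(t+1)^2/2) / Real.sqrt (2*π)) := by
        rw [setLIntegral_const, Real.volume_Icc]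
        norm_num
    _ ≤ ∫⁻ x in Set.Icc t (t+1), gaussianPDF 0 1 x := by
        refine setLIntegral_mono (measurable_gaussianPDF 0 1) fun x hx => ?_
        rw [gaussianPDF_def]
        refine ENNReal.ofReal_le_ofReal ?_
        rw [gaussianPDFReal_def]
        have h1 : Real.exp (-(t+1)^2/2) ≤ Real.exp (-(x - 0)^2/(2 * ((1:ℝ≥0):ℝ))) := by
          apply Real.exp_le_exp.mpr
          have hx1 : x ≤ t + 1 := hx.2
          have hx0 : 0 ≤ x := le_trans ht hx.1
          push_cast
          nlinarith
        have h2 : Real.sqrt (2 * π * ((1:ℝ≥0):ℝ)) = Real.sqrt (2 * π) := by norm_num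
        rw [h2, div_eq_inv_mul]
        have h3 : 0 ≤ (Real.sqrt (2 * π))⁻¹ := by positivity
        exact mul_le_mul_of_nonneg_left h1 h3
    _ ≤ ∫⁻ x in Set.Ici t, gaussianPDF 0 1 x := by
        apply lintegral_mono_set
        intro x hx
        exact hx.1


lemma MyAux.integrable_of_gaussian {Ω : Type} [MeasurableSpace Ω] {μ : Measure Ω} {g : Ω → ℝ}
    (hg : Measurable g) (hmap : μ.map g = gaussianReal 0 1) : Integrable g μ := by
  have h0 : Integrable id (μ.map g) := by
    rw [hmap, gaussianReal_of_var_ne_zero 0 one_ne_zero]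
    rw [integrable_withDensity_iff (measurable_gaussianPDF 0 1)
      (ae_of_all _ fun x => ENNReal.ofReal_lt_top)]
    have heq : (fun x => id x * (gaussianPDF 0 1 x).toReal)
        = fun x => (Real.sqrt (2 * π))⁻¹ * (x * Real.exp (-(1/2 : ℝ) * x ^ 2)) := by
      funext x
      rw [gaussianPDF_def, ENNReal.toReal_ofReal (gaussianPDFReal_nonneg _ _ _),
        gaussianPDFReal_def]
      simp only [id]
      have h1 : -(x - 0)^2/(2 * ((1:ℝ≥0):ℝ)) = -(1/2 : ℝ) * x ^ 2 := by push_cast; ring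
      have h2 : Real.sqrt (2 * π * ((1:ℝ≥0):ℝ)) = Real.sqrt (2 * π) := by norm_num
      rw [h1, h2]; ring
    rw [heq]
    exact (integrable_mul_exp_neg_mul_sq (by norm_num : (0:ℝ) < 1/2)).const_mul _
  exact (integrable_map_measure aestronglyMeasurable_id hg.aemeasurable).mp h0

lemma MyAux.integral_ge_of_meas {Ω : Type} [MeasurableSpace Ω] (μ : Measure Ω)
    [IsProbabilityMeasure μ] {S : Ω → ℝ} (hS : Measurable S) (hSint : Integrable S μ)
    (hS0 : ∀ ω, 0 ≤ S ω) {t : ℝ} (ht : 0 ≤ t) :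
    t * (μ {ω | t ≤ S ω}).toReal ≤ ∫ ω, S ω ∂μ := by
  set A := {ω | t ≤ S ω} with hA_def
  have hA : MeasurableSet A := measurableSet_le measurable_const hS
  have h1 : ∫ ω, A.indicator (fun _ => t) ω ∂μ = (μ A).toReal • t :=
    integral_indicator_const t hA
  calc t * (μ A).toReal = ∫ ω, A.indicator (fun _ => t) ω ∂μ := by
        rw [h1, smul_eq_mul]; ring
    _ ≤ ∫ ω, S ω ∂μ := by
        refine integral_mono ((integrable_const t).indicator hA) hSint fun ω => ?_
        by_cases h : ω ∈ A
        · rw [Set.indicator_of_mem h]; exact h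
        · rw [Set.indicator_of_notMem h]; exact hS0 ω

lemma MyAux.pow_bound : ∀ (N : ℕ) {p : ℝ}, 0 ≤ p → p ≤ 1 → (1-p)^N * (1 + N*p) ≤ 1 := by
  intro N
  induction N with
  | zero => intro p _ _; norm_num
  | succ n ih =>
    intro p h0 h1
    have hih := ih h0 h1
    have hn : (0:ℝ) ≤ (1-p)^n := pow_nonneg (by linarith) n
    have hcast : ((n+1 : ℕ) : ℝ) = (n:ℝ) + 1 := by push_cast; ring
    rw [hcast, pow_succ]
    have hnn : (0:ℝ) ≤ (n:ℝ) := Nat.cast_nonneg n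
    nlinarith [sq_nonneg p, mul_nonneg (mul_nonneg hn hnn) (sq_nonneg p),
      mul_nonneg hn (sq_nonneg p)]

set_option maxHeartbeats 1000000 in
theorem max_entry_lower_bound :
    ∃ c : ℝ, 0 < c ∧
      ∀ (m n : ℕ), 0 < m → 0 < n →
      ∀ (a : Matrix (Fin m) (Fin n) ℝ)
        (Ω : Type) (_ : MeasurableSpace Ω) (μ : Measure Ω) (_ : IsProbabilityMeasure μ)
        (g : Fin m × Fin n → Ω → ℝ),
        (∀ ij, Measurable (g ij)) →
        (∀ ij, μ.map (g ij) = gaussianReal 0 1) →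
        iIndepFun g μ →
        -- `bstar` is the decreasing rearrangement of the row maxima `b i = max_j |a i j|`
        ∀ (bstar : Fin m → ℝ) (σ : Equiv.Perm (Fin m)),
          Antitone bstar → (∀ i, bstar i = ⨆ j, |a (σ i) j|) →
          c * (⨆ i : Fin m, Real.sqrt (Real.log ((i : ℕ) + 1 + 3)) * bstar i)
            ≤ ∫ ω, ⨆ ij : Fin m × Fin n, |a ij.1 ij.2 * g ij ω| ∂μ := by
  classical
  set C : ℝ := (Real.exp 1 * Real.sqrt (2 * π))⁻¹ with hC_def
  have hCpos : 0 < C := by positivity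
  have hCle : C ≤ 1 := by
    rw [hC_def]
    have h1 : (1:ℝ) ≤ Real.exp 1 := Real.one_le_exp (by norm_num)
    have h2 : (1:ℝ) ≤ Real.sqrt (2 * π) := by
      rw [show (1:ℝ) = Real.sqrt 1 by simp]
      exact Real.sqrt_le_sqrt (by nlinarith [Real.pi_gt_three])
    have h3 : (1:ℝ) ≤ Real.exp 1 * Real.sqrt (2 * π) := by nlinarith
    exact inv_le_one_of_one_le₀ h3
  refine ⟨C / (4 * Real.sqrt 2), by positivity, ?_⟩
  intro m n hm hn a Ω mΩ μ hμ g hgmeas hgmap hgindep bstar σ hanti hbs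
  haveI : Nonempty (Fin m) := ⟨⟨0, hm⟩⟩
  haveI : Nonempty (Fin n) := ⟨⟨0, hn⟩⟩
  set S : Ω → ℝ := fun ω => ⨆ ij : Fin m × Fin n, |a ij.1 ij.2 * g ij ω| with hS_def
  have hSmeas : Measurable S :=
    Measurable.iSup fun ij => (measurable_const.mul (hgmeas ij)).abs
  have hSle : ∀ ω (p : Fin m × Fin n), |a p.1 p.2 * g p ω| ≤ S ω := by
    intro ω p
    rw [hS_def]
    exact le_ciSup (f := fun q : Fin m × Fin n => |a q.1 q.2 * g q ω|)
      (Set.Finite.bddAbove (Set.finite_range _)) p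
  have hS0 : ∀ ω, 0 ≤ S ω := fun ω =>
    le_trans (abs_nonneg _) (hSle ω (Classical.arbitrary _))
  have hSint : Integrable S μ := by
    have hint : ∀ p : Fin m × Fin n, Integrable (fun ω => |a p.1 p.2 * g p ω|) μ := fun p =>
      ((MyAux.integrable_of_gaussian (hgmeas p) (hgmap p)).const_mul _).abs
    have hsum : Integrable (fun ω => ∑ p : Fin m × Fin n, |a p.1 p.2 * g p ω|) μ :=
      integrable_finset_sum _ fun p _ => hint p
    refine hsum.mono hSmeas.aestronglyMeasurable (ae_of_all _ fun ω => ?_)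
    rw [Real.norm_eq_abs, Real.norm_eq_abs, abs_of_nonneg (hS0 ω),
      abs_of_nonneg (Finset.sum_nonneg fun p _ => abs_nonneg _)]
    exact ciSup_le fun p => Finset.single_le_sum
      (f := fun q : Fin m × Fin n => |a q.1 q.2 * g q ω|)
      (fun q _ => abs_nonneg _) (Finset.mem_univ p)
  obtain ⟨k, hk⟩ := exists_eq_ciSup_of_finite
    (f := fun i : Fin m => Real.sqrt (Real.log ((i : ℕ) + 1 + 3)) * bstar i)
  rw [← hk]
  -- setup constants
  set v : ℝ := ((k : ℕ) : ℝ) + 4 with hv_def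
  have hv4 : (4:ℝ) ≤ v := by
    have := Nat.cast_nonneg (α := ℝ) (k : ℕ); linarith
  have hlog1 : (1:ℝ) ≤ Real.log v := by
    rw [Real.le_log_iff_exp_le (by linarith)]
    have := Real.exp_one_lt_d9
    linarith
  set b : ℝ := bstar k with hb_def
  have hb0 : 0 ≤ b := by
    have h := le_ciSup (Set.Finite.bddAbove (Set.finite_range fun jx => |a (σ k) jx|))
      (Classical.arbitrary (Fin n))
    rw [hb_def, hbs k]
    exact le_trans (abs_nonneg _) h
  set t : ℝ := Real.sqrt (Real.log v / 2) with ht_def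
  have ht0 : 0 ≤ t := Real.sqrt_nonneg _
  have ht2 : t ^ 2 = Real.log v / 2 := Real.sq_sqrt (by linarith)
  -- choose maximizing columns
  have hjex : ∀ i : Fin m, ∃ jx : Fin n, |a (σ i) jx| = ⨆ jy, |a (σ i) jy| := fun i =>
    exists_eq_ciSup_of_finite
  choose j hj using hjex
  have hjb : ∀ i, |a (σ i) (j i)| = bstar i := fun i => by rw [hj i, ← hbs i]
  set e : Fin m → Fin m × Fin n := fun i => (σ i, j i) with he_def
  have he : Function.Injective e := fun i1 i2 h => σ.injective (congrArg Prod.fst h)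
  set T : Finset (Fin m × Fin n) := (Finset.Iic k).image e with hT_def
  have hTcard : T.card = (k : ℕ) + 1 := by
    rw [hT_def, Finset.card_image_of_injective _ he, Fin.card_Iic]
  -- tail probability
  set pt : ℝ := (gaussianReal 0 1 (Set.Ici t)).toReal with hpt_def
  have hpt0 : 0 ≤ pt := ENNReal.toReal_nonneg
  have hpt1 : pt ≤ 1 := by
    rw [hpt_def]
    calc (gaussianReal 0 1 (Set.Ici t)).toReal ≤ (1 : ℝ≥0∞).toReal :=
          ENNReal.toReal_mono ENNReal.one_ne_top prob_le_one
      _ = 1 := ENNReal.toReal_one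
  have hptlb : C / Real.sqrt v ≤ pt := by
    refine le_trans ?_ (MyAux.gaussian_tail_lb ht0)
    have hexp2 : Real.exp (-Real.log v / 2 - 1) = (Real.exp 1)⁻¹ * (Real.sqrt v)⁻¹ := by
      have hsv : Real.exp (Real.log v / 2) = Real.sqrt v := by
        rw [← Real.log_sqrt (by linarith : (0:ℝ) ≤ v),
          Real.exp_log (Real.sqrt_pos.mpr (by linarith))]
      rw [show -Real.log v / 2 - 1 = -(Real.log v / 2) + -1 by ring, Real.exp_add,
        Real.exp_neg, Real.exp_neg, hsv]
      ring
    have hexp1 : Real.exp (-Real.log v / 2 - 1) ≤ Real.exp (-(t+1)^2/2) := by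
      apply Real.exp_le_exp.mpr
      nlinarith [ht2, sq_nonneg (t - 1)]
    have heq : C / Real.sqrt v = Real.exp (-Real.log v / 2 - 1) / Real.sqrt (2 * π) := by
      rw [hexp2, hC_def, mul_inv]; ring
    rw [heq]
    have hs2π : (0:ℝ) < Real.sqrt (2 * π) := by positivity
    exact div_le_div_of_nonneg_right hexp1 hs2π.le
  -- (k+1) * pt lower bound
  have hsqv : Real.sqrt v ≤ 2 * (((k:ℕ):ℝ) + 1) := by
    have h1 : Real.sqrt v ≤ Real.sqrt ((2 * (((k:ℕ):ℝ) + 1))^2) := by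
      apply Real.sqrt_le_sqrt
      have := Nat.cast_nonneg (α := ℝ) (k : ℕ)
      nlinarith
    rwa [Real.sqrt_sq (by positivity)] at h1
  have hNp : C / 2 ≤ (((k:ℕ):ℝ) + 1) * pt := by
    have hkpos : (0:ℝ) < ((k:ℕ):ℝ) + 1 := by positivity
    have hvpos : (0:ℝ) < Real.sqrt v := Real.sqrt_pos.mpr (by linarith)
    calc C / 2 = (((k:ℕ):ℝ) + 1) * (C / (2 * (((k:ℕ):ℝ) + 1))) := by field_simp
      _ ≤ (((k:ℕ):ℝ) + 1) * (C / Real.sqrt v) := by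
          apply mul_le_mul_of_nonneg_left _ hkpos.le
          apply div_le_div_of_nonneg_left hCpos.le hvpos hsqv
      _ ≤ (((k:ℕ):ℝ) + 1) * pt := mul_le_mul_of_nonneg_left hptlb hkpos.le
  -- the intersection event
  set A : Set Ω := ⋂ p ∈ T, g p ⁻¹' Set.Iio t with hA_def
  have hAmeas : MeasurableSet A :=
    MeasurableSet.biInter T.countable_toSet fun p _ => (hgmeas p) measurableSet_Iio
  have hprod : μ A = ∏ p ∈ T, μ (g p ⁻¹' Set.Iio t) :=
    hgindep.meas_biInter fun p _ => ⟨Set.Iio t, measurableSet_Iio, rfl⟩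
  have hfac : ∀ p : Fin m × Fin n, (μ (g p ⁻¹' Set.Iio t)).toReal = 1 - pt := by
    intro p
    have h1 : μ (g p ⁻¹' Set.Iio t) = gaussianReal 0 1 (Set.Iio t) := by
      rw [← hgmap p, Measure.map_apply (hgmeas p) measurableSet_Iio]
    rw [h1, ← Set.compl_Ici, prob_compl_eq_one_sub measurableSet_Ici,
      ENNReal.toReal_sub_of_le prob_le_one ENNReal.one_ne_top, ENNReal.toReal_one, hpt_def]
  have hmuA : (μ A).toReal = (1 - pt) ^ ((k:ℕ) + 1) := by
    rw [hprod, ENNReal.toReal_prod, Finset.prod_congr rfl fun p _ => hfac p,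
      Finset.prod_const, hTcard]
  -- inclusion
  have hsubset : Aᶜ ⊆ {ω | t * b ≤ S ω} := by
    intro ω hω
    simp only [hA_def, Set.mem_compl_iff, Set.mem_iInter, Set.mem_preimage, Set.mem_Iio,
      not_forall, not_lt] at hω
    obtain ⟨p, hpT, hp⟩ := hω
    obtain ⟨i, hi, hip⟩ := Finset.mem_image.mp hpT
    have hib : b ≤ |a p.1 p.2| := by
      rw [← hip]
      show b ≤ |a (σ i) (j i)|
      rw [hjb i, hb_def]
      exact hanti (Finset.mem_Iic.mp hi)
    show t * b ≤ S ω
    calc t * b ≤ g p ω * |a p.1 p.2| :=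
          mul_le_mul hp hib hb0 (le_trans ht0 hp)
      _ ≤ |a p.1 p.2 * g p ω| := by
          rw [abs_mul, mul_comm]
          exact mul_le_mul_of_nonneg_left (le_abs_self _) (abs_nonneg _)
      _ ≤ S ω := hSle ω p
  -- probability lower bound
  have hP : 1 - (1 - pt) ^ ((k:ℕ) + 1) ≤ (μ {ω | t * b ≤ S ω}).toReal := by
    have h1 : μ Aᶜ ≤ μ {ω | t * b ≤ S ω} := measure_mono hsubset
    have h2 := ENNReal.toReal_mono (measure_ne_top μ _) h1
    rwa [prob_compl_eq_one_sub hAmeas, ENNReal.toReal_sub_of_le prob_le_one ENNReal.one_ne_top,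
      ENNReal.toReal_one, hmuA] at h2
  have hrb := MyAux.pow_bound ((k:ℕ) + 1) hpt0 hpt1
  push_cast at hrb
  have hr0 : (0:ℝ) ≤ (1 - pt) ^ ((k:ℕ) + 1) := pow_nonneg (by linarith) _
  have hkey : C / 4 ≤ 1 - (1 - pt) ^ ((k:ℕ) + 1) := by
    set r : ℝ := (1 - pt) ^ ((k:ℕ) + 1) with hr_def
    nlinarith [mul_le_mul_of_nonneg_left hNp hr0, hrb, hCpos.le, hCle]
  -- final chain
  have hfinal := MyAux.integral_ge_of_meas μ hSmeas hSint hS0 (mul_nonneg ht0 hb0)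
  have hsqlog : Real.sqrt (Real.log (((k:ℕ):ℝ) + 1 + 3)) = Real.sqrt 2 * t := by
    have h1 : ((k:ℕ):ℝ) + 1 + 3 = v := by rw [hv_def]; ring
    rw [h1, ht_def, Real.sqrt_div (by linarith : (0:ℝ) ≤ Real.log v)]
    have h2 : (0:ℝ) < Real.sqrt 2 := by positivity
    field_simp
  calc C / (4 * Real.sqrt 2) * (Real.sqrt (Real.log (((k:ℕ):ℝ) + 1 + 3)) * b)
      = (t * b) * (C / 4) := by
        rw [hsqlog]
        have h2 : (0:ℝ) < Real.sqrt 2 := by positivity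
        field_simp
    _ ≤ (t * b) * (μ {ω | t * b ≤ S ω}).toReal :=
        mul_le_mul_of_nonneg_left (le_trans hkey hP) (mul_nonneg ht0 hb0)
    _ ≤ ∫ ω, S ω ∂μ := hfinal
end
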